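/- (Correctness of the two-machine DP recurrence) Let t, d : Fin n → ℕ with d nondecreasing (d i ≤ d j whenever i ≤ j). For 0 ≤ i ≤ n and s ∈ ℕ, let F i s denote the proposition: there exists an assignment a of the first i jobs (indices 0,…,i−1) to two machines such that the total processing time of jobs assigned to machine 0 equals s, and for every job j < i, ∑_{k ≤ j, a k = a j} t k ≤ d j. Then for every 1 ≤ i ≤ n and every s ∈ ℕ: F i s holds if and only if either (t (i−1) ≤ s and s ≤ d (i−1) and F (i−1) (s − t (i−1))), or (F (i−1) s and (∑_{j < i} t j) − s ≤ d (i−1)). -/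

import Mathlib

open Finset

/-- `F n t d i s`: there is an assignment of the first `i` jobs (indices `< i`) to two
machines such that the total processing time of jobs assigned to machine `0` is exactly `s`,
and each of the first `i` jobs (processed in increasing index order on its machine)
finishes by its deadline. -/
def F (n : ℕ) (t d : Fin n → ℕ) (i s : ℕ) : Prop :=
  ∃ a : Fin n → Fin 2,
    (∑ k ∈ univ.filter (fun k : Fin n => (k : ℕ) < i ∧ a k = 0), t k) = s ∧
    ∀ j : Fin n, (j : ℕ) < i →
      ∑ k ∈ univ.filter (fun k => k ≤ j ∧ a k = a j), t k ≤ d j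

private lemma fin2_ne (x : Fin 2) : ¬ x = 0 ↔ x = 1 := by revert x; decide

private lemma sum_split (n i : ℕ) (hi1 : 1 ≤ i) (hin : i ≤ n) (t : Fin n → ℕ)
    (P : Fin n → Prop) [DecidablePred P] :
    ∑ k ∈ univ.filter (fun k : Fin n => (k : ℕ) < i ∧ P k), t k
      = (∑ k ∈ univ.filter (fun k : Fin n => (k : ℕ) < i - 1 ∧ P k), t k)
        + (if P ⟨i - 1, Nat.lt_of_lt_of_le (Nat.sub_lt hi1 Nat.one_pos) hin⟩ then t ⟨i - 1, Nat.lt_of_lt_of_le (Nat.sub_lt hi1 Nat.one_pos) hin⟩ else 0) := by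
  set p : Fin n := ⟨i - 1, by omega⟩ with hp
  have hfil : univ.filter (fun k : Fin n => (k : ℕ) < i ∧ P k)
      = univ.filter (fun k : Fin n => (k : ℕ) < i - 1 ∧ P k)
        ∪ univ.filter (fun k : Fin n => k = p ∧ P k) := by
    ext k
    simp only [mem_filter, mem_union, mem_univ, true_and]
    constructor
    · rintro ⟨hk, hP⟩
      by_cases h : (k : ℕ) < i - 1
      · exact Or.inl ⟨h, hP⟩
      · refine Or.inr ⟨Fin.ext ?_, hP⟩
        show (k : ℕ) = i - 1
        omega
    · rintro (⟨hk, hP⟩ | ⟨rfl, hP⟩)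
      · exact ⟨by omega, hP⟩
      · exact ⟨by show i - 1 < i; omega, hP⟩
  have hdisj : Disjoint (univ.filter (fun k : Fin n => (k : ℕ) < i - 1 ∧ P k))
      (univ.filter (fun k : Fin n => k = p ∧ P k)) := by
    rw [disjoint_left]
    intro k hk hk'
    simp only [mem_filter] at hk hk'
    obtain ⟨_, hk1, _⟩ := hk
    obtain ⟨_, rfl, _⟩ := hk'
    simp only [hp] at hk1
    omega
  rw [hfil, sum_union hdisj]
  congr 1
  by_cases hP : P p
  · rw [if_pos hP]
    have hset : univ.filter (fun k : Fin n => k = p ∧ P k) = {p} := by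
      ext k
      simp only [mem_filter, mem_univ, true_and, mem_singleton]
      exact ⟨fun h => h.1, fun h => ⟨h, h ▸ hP⟩⟩
    rw [hset, sum_singleton]
  · rw [if_neg hP]
    have hset : univ.filter (fun k : Fin n => k = p ∧ P k) = ∅ := by
      ext k
      simp only [mem_filter, mem_univ, true_and, notMem_empty, iff_false]
      rintro ⟨rfl, h⟩
      exact hP h
    rw [hset, sum_empty]

/-- Correctness of the two-machine DP recurrence. -/
theorem two_machine_dp_recurrence (n : ℕ) (t d : Fin n → ℕ) (hd : Monotone d)
    (i : ℕ) (hi1 : 1 ≤ i) (hin : i ≤ n) (s : ℕ) :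
    F n t d i s ↔
      ((t ⟨i - 1, by omega⟩ ≤ s ∧ s ≤ d ⟨i - 1, by omega⟩ ∧
          F n t d (i - 1) (s - t ⟨i - 1, by omega⟩)) ∨
       (F n t d (i - 1) s ∧
          (∑ j ∈ univ.filter (fun j : Fin n => (j : ℕ) < i), t j) - s ≤ d ⟨i - 1, by omega⟩)) := by
  classical
  have hpn : i - 1 < n := by omega
  set p : Fin n := ⟨i - 1, hpn⟩ with hp
  have hpi : (p : ℕ) < i := by simp [hp]; omega
  have hq : ∀ (h : i - 1 < n), (⟨i - 1, h⟩ : Fin n) = p := fun _ => rfl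
  have hle : ∀ k : Fin n, (k ≤ p ↔ (k : ℕ) < i) := by
    intro k
    rw [Fin.le_def]
    show (k : ℕ) ≤ i - 1 ↔ _
    omega
  -- total split by machine
  have htot : ∀ (a : Fin n → Fin 2) (m : ℕ),
      ∑ k ∈ univ.filter (fun k : Fin n => (k : ℕ) < m), t k
        = (∑ k ∈ univ.filter (fun k : Fin n => (k : ℕ) < m ∧ a k = 0), t k)
          + (∑ k ∈ univ.filter (fun k : Fin n => (k : ℕ) < m ∧ a k = 1), t k) := by
    intro a m
    rw [← sum_filter_add_sum_filter_not (univ.filter (fun k : Fin n => (k : ℕ) < m))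
      (fun k => a k = 0), filter_filter, filter_filter]
    congr 2
    apply filter_congr
    intro k _
    simp [fin2_ne (a k), and_comm]
  -- deadline sums for j don't change when modifying a at p (for j earlier than p)
  have hmod : ∀ (a : Fin n → Fin 2) (c : Fin 2) (j : Fin n), (j : ℕ) < i - 1 →
      univ.filter (fun k : Fin n =>
          k ≤ j ∧ (Function.update a p c) k = (Function.update a p c) j)
        = univ.filter (fun k : Fin n => k ≤ j ∧ a k = a j) := by
    intro a c j hj
    have hjp : j ≠ p := by
      intro h; rw [h] at hj; simp [hp] at hj
    apply filter_congr
    intro k _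
    by_cases hk : k ≤ j
    · have hkp : k ≠ p := by
        intro h
        rw [Fin.le_def, h] at hk
        simp [hp] at hk
        omega
      simp [hk, Function.update_of_ne hkp, Function.update_of_ne hjp]
    · simp [hk]
  have hmod0 : ∀ (a : Fin n → Fin 2) (c c' : Fin 2),
      univ.filter (fun k : Fin n => (k : ℕ) < i - 1 ∧ Function.update a p c k = c')
        = univ.filter (fun k : Fin n => (k : ℕ) < i - 1 ∧ a k = c') := by
    intro a c c'
    apply filter_congr
    intro k _
    by_cases hk : (k : ℕ) < i - 1
    · have hkp : k ≠ p := by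
        intro h; rw [h] at hk; simp [hp] at hk
      simp [hk, Function.update_of_ne hkp]
    · simp [hk]
  have hcomp : ∀ (a : Fin n → Fin 2) (c : Fin 2),
      univ.filter (fun k : Fin n => k ≤ p ∧ a k = c)
        = univ.filter (fun k : Fin n => (k : ℕ) < i ∧ a k = c) := by
    intro a c
    apply filter_congr
    intro k _
    rw [hle k]
  constructor
  · rintro ⟨a, hsum, hdl⟩
    have hdp := hdl p hpi
    by_cases hc : a p = 0
    · left
      have hsp := sum_split n i hi1 hin t (fun k => a k = 0)
      simp only [hq] at hsp
      rw [hsum, if_pos hc] at hsp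
      refine ⟨by omega, ?_, a, by omega, fun j hj => hdl j (by omega)⟩
      calc s = ∑ k ∈ univ.filter (fun k : Fin n => k ≤ p ∧ a k = a p), t k := by
              rw [hcomp a (a p)]
              simp only [hc]
              exact hsum.symm
        _ ≤ d p := hdp
    · right
      have hc1 : a p = 1 := (fin2_ne _).mp hc
      have hsp := sum_split n i hi1 hin t (fun k => a k = 0)
      simp only [hq] at hsp
      rw [hsum, if_neg (by rw [hc1]; decide)] at hsp
      refine ⟨⟨a, by omega, fun j hj => hdl j (by omega)⟩, ?_⟩
      have h1 : ∑ k ∈ univ.filter (fun k : Fin n => (k : ℕ) < i ∧ a k = 1), t k ≤ d p := by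
        rw [← hcomp a 1]
        calc _ = ∑ k ∈ univ.filter (fun k : Fin n => k ≤ p ∧ a k = a p), t k := by
                simp only [hc1]
          _ ≤ d p := hdp
      have ht := htot a i
      omega
  · rintro (⟨htp, hsd, a, hsum, hdl⟩ | ⟨⟨a, hsum, hdl⟩, htd⟩)
    · refine ⟨Function.update a p 0, ?_, ?_⟩
      · have hsp := sum_split n i hi1 hin t (fun k => Function.update a p 0 k = 0)
        simp only [hq] at hsp
        rw [hmod0 a 0 0, hsum, if_pos (Function.update_self p 0 a)] at hsp
        rw [hsp]
        omega
      · intro j hj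
        by_cases hj1 : (j : ℕ) < i - 1
        · rw [hmod a 0 j hj1]
          exact hdl j hj1
        · have hjp : j = p := Fin.ext (by show (j : ℕ) = i - 1; omega)
          subst hjp
          rw [show (Function.update a p 0) p = 0 from Function.update_self p 0 a,
            hcomp (Function.update a p 0) 0]
          have hsp := sum_split n i hi1 hin t (fun k => Function.update a p 0 k = 0)
          simp only [hq] at hsp
          rw [hmod0 a 0 0, hsum, if_pos (Function.update_self p 0 a)] at hsp
          rw [hsp]
          calc s - t p + t p = s := by omega
            _ ≤ d p := hsd
    · refine ⟨Function.update a p 1, ?_, ?_⟩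
      · have hsp := sum_split n i hi1 hin t (fun k => Function.update a p 1 k = 0)
        simp only [hq] at hsp
        rw [hmod0 a 1 0, hsum, if_neg (by rw [Function.update_self]; decide)] at hsp
        omega
      · intro j hj
        by_cases hj1 : (j : ℕ) < i - 1
        · rw [hmod a 1 j hj1]
          exact hdl j hj1
        · have hjp : j = p := Fin.ext (by show (j : ℕ) = i - 1; omega)
          subst hjp
          rw [show (Function.update a p 1) p = 1 from Function.update_self p 1 a,
            hcomp (Function.update a p 1) 1]
          have hsp := sum_split n i hi1 hin t (fun k => Function.update a p 1 k = 1)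
          simp only [hq] at hsp
          rw [hmod0 a 1 1, if_pos (Function.update_self p 1 a)] at hsp
          rw [hsp]
          -- total split
          have htsplit : ∑ k ∈ univ.filter (fun k : Fin n => (k : ℕ) < i), t k
              = (∑ k ∈ univ.filter (fun k : Fin n => (k : ℕ) < i - 1), t k) + t p := by
            have h := sum_split n i hi1 hin t (fun _ => True)
            simp only [hq] at h
            simpa using h
          have ht := htot a (i - 1)
          rw [hsum] at ht
          omega
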